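/- For every nonnegative integer m, the following identity of integers holds: Σ_{k=0}^{m} C(2k,k)²·C(4k,2k)·C(k,m−k)·(−64)^{m−k} = Σ_{k=0}^{m} C(2k,k)·C(4k,2k)·C(2(m−k),m−k)·C(4(m−k),2(m−k)). -/

import Mathlib

open Finset

namespace Stmt16Aux

def cc (n : ℕ) : ℚ := ((2 * n).choose n : ℚ)

def Aq (k : ℕ) : ℚ := cc k ^ 2 * cc (2 * k)

def Bq (k : ℕ) : ℚ := cc k * cc (2 * k)

def P0 (m : ℕ) : ℚ := -1024 * ((m : ℚ) + 1) * (2 * m + 1) * (2 * m + 3)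
def P1 (m : ℕ) : ℚ := 8 * (2 * (m : ℚ) + 3) * (8 * (m : ℚ) ^ 2 + 24 * m + 19)
def P2 (m : ℕ) : ℚ := -((m : ℚ) + 2) ^ 3

lemma cc_succ (n : ℕ) : ((n : ℚ) + 1) * cc (n + 1) = 2 * (2 * (n : ℚ) + 1) * cc n := by
  have h := Nat.succ_mul_centralBinom_succ n
  rw [Nat.centralBinom_eq_two_mul_choose, Nat.centralBinom_eq_two_mul_choose] at h
  unfold cc
  exact_mod_cast h

lemma cc_succ' (n : ℕ) : cc (n + 1) = 2 * (2 * (n : ℚ) + 1) * cc n / ((n : ℚ) + 1) := by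
  rw [eq_div_iff (by positivity)]
  linear_combination cc_succ n

lemma Bq_succ (n : ℕ) :
    Bq (n + 1) = 4 * (4 * (n : ℚ) + 1) * (4 * (n : ℚ) + 3) * Bq n / ((n : ℚ) + 1) ^ 2 := by
  unfold Bq
  rw [show 2 * (n + 1) = (2 * n + 1) + 1 by ring]
  rw [cc_succ' (2 * n + 1), cc_succ' (2 * n), cc_succ' n]
  have h1 : ((n : ℚ) + 1) ≠ 0 := by positivity
  have h2 : (2 * (n : ℚ) + 1) ≠ 0 := by positivity
  have h3 : (2 * (n : ℚ) + 1 + 1) ≠ 0 := by positivity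
  push_cast
  field_simp
  ring

lemma Aq_succ (n : ℕ) :
    Aq (n + 1) = 8 * (2 * (n : ℚ) + 1) * (4 * (n : ℚ) + 1) * (4 * (n : ℚ) + 3) * Aq n
      / ((n : ℚ) + 1) ^ 3 := by
  unfold Aq
  rw [show 2 * (n + 1) = (2 * n + 1) + 1 by ring]
  rw [cc_succ' (2 * n + 1), cc_succ' (2 * n), cc_succ' n]
  have h1 : ((n : ℚ) + 1) ≠ 0 := by positivity
  have h2 : (2 * (n : ℚ) + 1) ≠ 0 := by positivity
  have h3 : (2 * (n : ℚ) + 1 + 1) ≠ 0 := by positivity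
  push_cast
  field_simp
  ring

lemma chr (n r : ℕ) :
    ((r : ℚ) + 1) * (n.choose (r + 1) : ℚ) = ((n : ℚ) - r) * (n.choose r : ℚ) := by
  rcases le_or_gt r n with h | h
  · have h0 := Nat.choose_succ_right_eq n r
    have h2 : ((n.choose (r + 1) * (r + 1) : ℕ) : ℚ) = ((n.choose r * (n - r) : ℕ) : ℚ) := by
      exact_mod_cast congrArg (fun x : ℕ => (x : ℚ)) h0
    push_cast [Nat.cast_sub h] at h2
    linarith
  · rw [Nat.choose_eq_zero_of_lt h, Nat.choose_eq_zero_of_lt (by omega)]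
    simp

lemma chs (n r : ℕ) :
    ((n : ℚ) + 1) * (n.choose r : ℚ) = ((r : ℚ) + 1) * ((n + 1).choose (r + 1) : ℚ) := by
  have h := Nat.add_one_mul_choose_eq n r
  exact_mod_cast h.trans (mul_comm _ _)

def S1 (m : ℕ) : ℚ := ∑ k ∈ range (m + 1), Aq k * (k.choose (m - k) : ℚ) * (-64) ^ (m - k)

def S2 (m : ℕ) : ℚ := ∑ k ∈ range (m + 1), Bq k * Bq (m - k)

def g2 (m k : ℕ) : ℚ :=
  -4 * (k : ℚ) ^ 2 *
      ((((m + 1 - k : ℕ) : ℚ) + 1) * (16 * ((m + 1 - k : ℕ) : ℚ) + 7)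
        + (k : ℚ) * (16 * ((m + 1 - k : ℕ) : ℚ) + 13))
    * Bq k * Bq (m + 1 - k) / (((m + 1 - k : ℕ) : ℚ) + 1) ^ 2

def g1 (m k : ℕ) : ℚ :=
  4096 * (k : ℚ) ^ 2 * (((m + 2 - k : ℕ) : ℚ) - k - 2) * (((m + 2 - k : ℕ) : ℚ) - k - 1)
      * (((m + 2 - k : ℕ) : ℚ) + k) * Aq k * (((k + 2).choose (m + 2 - k) : ℕ) : ℚ)
      * (-64) ^ (m + 1 - k) / ((-64) * ((k : ℚ) + 1) * ((k : ℚ) + 2))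

lemma step2 (k j : ℕ) :
    P0 (k + j) * (Bq k * Bq j) + P1 (k + j) * (Bq k * Bq (j + 1))
        + P2 (k + j) * (Bq k * Bq (j + 2))
      = g2 (k + j) (k + 1) - g2 (k + j) k := by
  unfold g2 P0 P1 P2
  rw [show k + j + 1 - (k + 1) = j by omega, show k + j + 1 - k = j + 1 by omega]
  have hj2 : Bq (j + 2)
      = 4 * (4 * ((j : ℚ) + 1) + 1) * (4 * ((j : ℚ) + 1) + 3) * Bq (j + 1)
        / (((j : ℚ) + 1) + 1) ^ 2 := by
    have h := Bq_succ (j + 1); push_cast at h; exact h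
  rw [hj2, Bq_succ j, Bq_succ k]
  have d1 : ((j : ℚ) + 1) ≠ 0 := by positivity
  have d2 : ((j : ℚ) + 1 + 1) ≠ 0 := by positivity
  have d3 : ((k : ℚ) + 1) ≠ 0 := by positivity
  push_cast
  field_simp
  ring

lemma rec2 (m : ℕ) : P0 m * S2 m + P1 m * S2 (m + 1) + P2 m * S2 (m + 2) = 0 := by
  have hstep : ∀ k ∈ range (m + 1),
      P0 m * (Bq k * Bq (m - k)) + P1 m * (Bq k * Bq (m + 1 - k))
          + P2 m * (Bq k * Bq (m + 2 - k))
        = g2 m (k + 1) - g2 m k := by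
    intro k hk
    have hk' : k ≤ m := by simpa [Nat.lt_succ_iff] using hk
    have h := step2 k (m - k)
    rw [show k + (m - k) = m by omega, show (m - k) + 1 = m + 1 - k by omega,
      show (m - k) + 2 = m + 2 - k by omega] at h
    exact h
  have key : ∑ k ∈ range (m + 1),
      (P0 m * (Bq k * Bq (m - k)) + P1 m * (Bq k * Bq (m + 1 - k))
        + P2 m * (Bq k * Bq (m + 2 - k))) = g2 m (m + 1) - g2 m 0 := by
    rw [Finset.sum_congr rfl hstep, Finset.sum_range_sub (g2 m)]
  have hg0 : g2 m 0 = 0 := by simp [g2]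
  have expand1 : S2 (m + 1)
      = (∑ k ∈ range (m + 1), Bq k * Bq (m + 1 - k)) + Bq (m + 1) * Bq 0 := by
    unfold S2
    rw [Finset.sum_range_succ, Nat.sub_self]
  have expand2 : S2 (m + 2)
      = (∑ k ∈ range (m + 1), Bq k * Bq (m + 2 - k)) + Bq (m + 1) * Bq 1
        + Bq (m + 2) * Bq 0 := by
    unfold S2
    rw [Finset.sum_range_succ, Finset.sum_range_succ,
      show m + 2 - (m + 1) = 1 by omega, show m + 2 - (m + 2) = 0 by omega]
  have comb : P0 m * S2 m + P1 m * (∑ k ∈ range (m + 1), Bq k * Bq (m + 1 - k))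
      + P2 m * (∑ k ∈ range (m + 1), Bq k * Bq (m + 2 - k)) = g2 m (m + 1) := by
    rw [show S2 m = ∑ k ∈ range (m + 1), Bq k * Bq (m - k) from rfl]
    rw [Finset.mul_sum, Finset.mul_sum, Finset.mul_sum, ← Finset.sum_add_distrib,
      ← Finset.sum_add_distrib, key, hg0, sub_zero]
  have hbd : g2 m (m + 1) + P1 m * (Bq (m + 1) * Bq 0)
      + P2 m * (Bq (m + 1) * Bq 1 + Bq (m + 2) * Bq 0) = 0 := by
    unfold g2 P1 P2
    rw [show m + 1 - (m + 1) = 0 by omega]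
    have hB0 : Bq 0 = 1 := by norm_num [Bq, cc]
    have hB1 : Bq 1 = 12 := by norm_num [Bq, cc, Nat.choose]
    have hm2 : Bq (m + 2)
        = 4 * (4 * ((m : ℚ) + 1) + 1) * (4 * ((m : ℚ) + 1) + 3) * Bq (m + 1)
          / (((m : ℚ) + 1) + 1) ^ 2 := by
      have h := Bq_succ (m + 1); push_cast at h; exact h
    rw [hB0, hB1, hm2]
    have d1 : ((m : ℚ) + 1 + 1) ≠ 0 := by positivity
    push_cast
    field_simp
    ring
  rw [expand1, expand2]
  linear_combination comb + hbd

lemma step1 (k j : ℕ) :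
    P0 (k + j) * (Aq k * (k.choose j : ℚ) * (-64) ^ j)
        + P1 (k + j) * (Aq k * (k.choose (j + 1) : ℚ) * (-64) ^ (j + 1))
        + P2 (k + j) * (Aq k * (k.choose (j + 2) : ℚ) * (-64) ^ (j + 2))
      = g1 (k + j) (k + 1) - g1 (k + j) k := by
  unfold g1 P0 P1 P2
  rw [show k + j + 2 - (k + 1) = j + 1 by omega, show k + j + 2 - k = j + 2 by omega,
    show k + j + 1 - (k + 1) = j by omega, show k + j + 1 - k = j + 1 by omega,
    show k + 1 + 2 = k + 3 from rfl]
  rw [Aq_succ k]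
  have d3 : ((k : ℚ) + 1) ≠ 0 := by positivity
  have d4 : ((k : ℚ) + 2) ≠ 0 := by positivity
  have d5 : ((k : ℚ) + 3) ≠ 0 := by positivity
  rcases le_or_gt j k with hjk | hjk
  · -- main case : j ≤ k
    obtain ⟨i, rfl⟩ : ∃ i, k = j + i := ⟨k - j, by omega⟩
    have hc1 : ((j + i).choose (j + 1) : ℚ)
        = (i : ℚ) * ((j + i).choose j : ℚ) / ((j : ℚ) + 1) := by
      rw [eq_div_iff (by positivity)]
      have h := chr (j + i) j; push_cast at h; linear_combination h
    have hc2 : ((j + i).choose (j + 2) : ℚ)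
        = ((i : ℚ) - 1) * ((j + i).choose (j + 1) : ℚ) / ((j : ℚ) + 2) := by
      rw [eq_div_iff (by positivity)]
      have h := chr (j + i) (j + 1); push_cast at h; linear_combination h
    have hd : ((j + i + 1).choose (j + 1) : ℚ)
        = ((j : ℚ) + (i : ℚ) + 1) * ((j + i).choose j : ℚ) / ((j : ℚ) + 1) := by
      rw [eq_div_iff (by positivity)]
      have h := chs (j + i) j; push_cast at h; linear_combination -h
    have hb : ((j + i + 2).choose (j + 2) : ℚ)
        = ((j : ℚ) + (i : ℚ) + 2) * ((j + i + 1).choose (j + 1) : ℚ) / ((j : ℚ) + 2) := by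
      rw [eq_div_iff (by positivity)]
      have h := chs (j + i + 1) (j + 1); push_cast at h; linear_combination -h
    have hh : ((j + i + 1).choose j : ℚ)
        = ((j : ℚ) + 1) * ((j + i + 1).choose (j + 1) : ℚ) / ((i : ℚ) + 1) := by
      rw [eq_div_iff (by positivity)]
      have h := chr (j + i + 1) j; push_cast at h; linear_combination -h
    have hf : ((j + i + 2).choose (j + 1) : ℚ)
        = ((j : ℚ) + (i : ℚ) + 2) * ((j + i + 1).choose j : ℚ) / ((j : ℚ) + 1) := by
      rw [eq_div_iff (by positivity)]
      have h := chs (j + i + 1) j; push_cast at h; linear_combination -h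
    have he : ((j + i + 2).choose j : ℚ)
        = ((j : ℚ) + 1) * ((j + i + 2).choose (j + 1) : ℚ) / ((i : ℚ) + 2) := by
      rw [eq_div_iff (by positivity)]
      have h := chr (j + i + 2) j; push_cast at h; linear_combination -h
    have hc3 : ((j + i + 3).choose (j + 1) : ℚ)
        = ((j : ℚ) + (i : ℚ) + 3) * ((j + i + 2).choose j : ℚ) / ((j : ℚ) + 1) := by
      rw [show j + i + 3 = j + i + 2 + 1 from rfl, eq_div_iff (by positivity)]
      have h := chs (j + i + 2) j; push_cast at h; linear_combination -h
    rw [show j + i + 3 = j + i + 2 + 1 from rfl] at hc3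
    rw [show (j + i) + 3 = j + i + 2 + 1 from rfl]
    rw [hc3, he, hf, hh, hb, hd, hc2, hc1]
    have e1 : ((j : ℚ) + 1) ≠ 0 := by positivity
    have e2 : ((j : ℚ) + 2) ≠ 0 := by positivity
    have e3 : ((i : ℚ) + 1) ≠ 0 := by positivity
    have e4 : ((i : ℚ) + 2) ≠ 0 := by positivity
    push_cast
    field_simp
    ring
  · -- degenerate cases : k < j
    rcases (show j = k + 1 ∨ j = k + 2 ∨ k + 3 ≤ j by omega) with rfl | rfl | h3
    · rw [Nat.choose_eq_zero_of_lt (show k < k + 1 by omega),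
        Nat.choose_eq_zero_of_lt (show k < k + 1 + 1 by omega),
        Nat.choose_eq_zero_of_lt (show k < k + 1 + 2 by omega),
        Nat.choose_eq_zero_of_lt (show k + 2 < k + 1 + 2 by omega)]
      push_cast
      field_simp
      all_goals ring
    · rw [Nat.choose_eq_zero_of_lt (show k < k + 2 by omega),
        Nat.choose_eq_zero_of_lt (show k < k + 2 + 1 by omega),
        Nat.choose_eq_zero_of_lt (show k < k + 2 + 2 by omega),
        Nat.choose_eq_zero_of_lt (show k + 2 < k + 2 + 2 by omega)]
      push_cast
      field_simp
      all_goals ring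
    · rw [Nat.choose_eq_zero_of_lt (show k < j by omega),
        Nat.choose_eq_zero_of_lt (show k < j + 1 by omega),
        Nat.choose_eq_zero_of_lt (show k < j + 2 by omega),
        Nat.choose_eq_zero_of_lt (show k + 2 < j + 2 by omega),
        Nat.choose_eq_zero_of_lt (show k + 3 < j + 1 by omega)]
      push_cast
      field_simp
      ring

lemma rec1 (m : ℕ) : P0 m * S1 m + P1 m * S1 (m + 1) + P2 m * S1 (m + 2) = 0 := by
  have hstep : ∀ k ∈ range (m + 1),
      P0 m * (Aq k * (k.choose (m - k) : ℚ) * (-64) ^ (m - k))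
          + P1 m * (Aq k * (k.choose (m + 1 - k) : ℚ) * (-64) ^ (m + 1 - k))
          + P2 m * (Aq k * (k.choose (m + 2 - k) : ℚ) * (-64) ^ (m + 2 - k))
        = g1 m (k + 1) - g1 m k := by
    intro k hk
    have hk' : k ≤ m := by simpa [Nat.lt_succ_iff] using hk
    have h := step1 k (m - k)
    rw [show k + (m - k) = m by omega, show (m - k) + 1 = m + 1 - k by omega,
      show (m - k) + 2 = m + 2 - k by omega] at h
    exact h
  have key : ∑ k ∈ range (m + 1),
      (P0 m * (Aq k * (k.choose (m - k) : ℚ) * (-64) ^ (m - k))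
        + P1 m * (Aq k * (k.choose (m + 1 - k) : ℚ) * (-64) ^ (m + 1 - k))
        + P2 m * (Aq k * (k.choose (m + 2 - k) : ℚ) * (-64) ^ (m + 2 - k)))
      = g1 m (m + 1) - g1 m 0 := by
    rw [Finset.sum_congr rfl hstep, Finset.sum_range_sub (g1 m)]
  have hg0 : g1 m 0 = 0 := by simp [g1]
  have expand1 : S1 (m + 1)
      = (∑ k ∈ range (m + 1), Aq k * (k.choose (m + 1 - k) : ℚ) * (-64) ^ (m + 1 - k))
        + Aq (m + 1) := by
    unfold S1
    rw [Finset.sum_range_succ, Nat.sub_self]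
    simp
  have expand2 : S1 (m + 2)
      = (∑ k ∈ range (m + 1), Aq k * (k.choose (m + 2 - k) : ℚ) * (-64) ^ (m + 2 - k))
        + Aq (m + 1) * (((m + 1 : ℕ)) : ℚ) * (-64) + Aq (m + 2) := by
    unfold S1
    rw [Finset.sum_range_succ, Finset.sum_range_succ,
      show m + 2 - (m + 1) = 1 by omega, show m + 2 - (m + 2) = 0 by omega]
    simp [Nat.choose_one_right]
    all_goals ring
  have comb : P0 m * S1 m
      + P1 m * (∑ k ∈ range (m + 1), Aq k * (k.choose (m + 1 - k) : ℚ) * (-64) ^ (m + 1 - k))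
      + P2 m * (∑ k ∈ range (m + 1), Aq k * (k.choose (m + 2 - k) : ℚ) * (-64) ^ (m + 2 - k))
      = g1 m (m + 1) := by
    rw [show S1 m = ∑ k ∈ range (m + 1), Aq k * (k.choose (m - k) : ℚ) * (-64) ^ (m - k)
      from rfl]
    rw [Finset.mul_sum, Finset.mul_sum, Finset.mul_sum, ← Finset.sum_add_distrib,
      ← Finset.sum_add_distrib, key, hg0, sub_zero]
  have hbd : g1 m (m + 1) + P1 m * Aq (m + 1)
      + P2 m * (Aq (m + 1) * (((m + 1 : ℕ)) : ℚ) * (-64) + Aq (m + 2)) = 0 := by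
    unfold g1 P1 P2
    rw [show m + 2 - (m + 1) = 1 by omega, show m + 1 - (m + 1) = 0 by omega,
      show m + 1 + 2 = m + 3 from rfl, Nat.choose_one_right]
    have hm2 : Aq (m + 2)
        = 8 * (2 * ((m : ℚ) + 1) + 1) * (4 * ((m : ℚ) + 1) + 1) * (4 * ((m : ℚ) + 1) + 3)
          * Aq (m + 1) / (((m : ℚ) + 1) + 1) ^ 3 := by
      have h := Aq_succ (m + 1); push_cast at h; exact h
    rw [hm2]
    have d1 : ((m : ℚ) + 1 + 1) ≠ 0 := by positivity
    have d2 : ((m : ℚ) + 2) ≠ 0 := by positivity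
    have d3 : ((m : ℚ) + 3) ≠ 0 := by positivity
    push_cast
    field_simp
    ring
  rw [expand1, expand2]
  linear_combination comb + hbd

lemma base0 : S1 0 = S2 0 := by
  norm_num [S1, S2, Aq, Bq, cc]

lemma base1 : S1 1 = S2 1 := by
  simp [S1, S2, Aq, Bq, cc, Finset.sum_range_succ]
  norm_num [Nat.choose]

lemma main (m : ℕ) : S1 m = S2 m ∧ S1 (m + 1) = S2 (m + 1) := by
  induction m with
  | zero => exact ⟨base0, base1⟩
  | succ n ih =>
    refine ⟨ih.2, ?_⟩
    show S1 (n + 2) = S2 (n + 2)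
    have hP2 : P2 n ≠ 0 := by
      have hpos : (0:ℚ) < ((n : ℚ) + 2) ^ 3 := by positivity
      simp only [P2, ne_eq, neg_eq_zero]
      exact ne_of_gt hpos
    apply mul_left_cancel₀ hP2
    have h1 := rec1 n
    have h2 := rec2 n
    linear_combination h1 - h2 - P0 n * ih.1 - P1 n * ih.2

end Stmt16Aux

theorem stmt_16 (m : ℕ) :
    ∑ k ∈ Finset.range (m + 1),
        ((2 * k).choose k : ℤ) ^ 2 * ((4 * k).choose (2 * k) : ℤ) * (k.choose (m - k) : ℤ) *
          (-64 : ℤ) ^ (m - k)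
      = ∑ k ∈ Finset.range (m + 1),
          ((2 * k).choose k : ℤ) * ((4 * k).choose (2 * k) : ℤ) *
            ((2 * (m - k)).choose (m - k) : ℤ) * ((4 * (m - k)).choose (2 * (m - k)) : ℤ) := by
  open Stmt16Aux in
  have h := (Stmt16Aux.main m).1
  have hL : ((∑ k ∈ Finset.range (m + 1),
      ((2 * k).choose k : ℤ) ^ 2 * ((4 * k).choose (2 * k) : ℤ) * (k.choose (m - k) : ℤ) *
        (-64 : ℤ) ^ (m - k) : ℤ) : ℚ) = Stmt16Aux.S1 m := by
    push_cast
    refine Finset.sum_congr rfl fun k _ => ?_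
    unfold Stmt16Aux.Aq Stmt16Aux.cc
    rw [show 2 * (2 * k) = 4 * k by ring]
    all_goals ring
  have hR : ((∑ k ∈ Finset.range (m + 1),
      ((2 * k).choose k : ℤ) * ((4 * k).choose (2 * k) : ℤ) *
        ((2 * (m - k)).choose (m - k) : ℤ) * ((4 * (m - k)).choose (2 * (m - k)) : ℤ) : ℤ) : ℚ)
      = Stmt16Aux.S2 m := by
    push_cast
    refine Finset.sum_congr rfl fun k _ => ?_
    unfold Stmt16Aux.Bq Stmt16Aux.cc
    rw [show 2 * (2 * k) = 4 * k by ring, show 2 * (2 * (m - k)) = 4 * (m - k) by ring]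
    all_goals ring
  exact_mod_cast hL.trans (h.trans hR.symm)
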